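/- Let N > 3, let α_μ < 0 for 0 < μ < N, fix τ with |α_τ| = min_{0<μ<N} |α_μ|, and let |α_σ| := min_{0<μ<N, μ≠τ} |α_μ| be the second weakest ferromagnetic bond strength. Define α_(d) := (Σ_{μ=1, μ≠τ}^{N−1} |α_μ|^{−1})^{−1} and g(x) := Σ_{μ=1, μ≠τ}^{N−1} arcsin(x/|α_μ|). Then the equation g(x) = π/2 has a unique solution α_(d') in (0, |α_σ|), and 0 < α_(d) < α_(d') < |α_σ|. -/

import Mathlib

open Real Finset

/-- Jordan's inequality: `2/π * t < sin t` for `t ∈ (0, π/2)`. -/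
lemma jordan_aux {t : ℝ} (h0 : 0 < t) (h2 : t < π / 2) : 2 / π * t < Real.sin t := by
  have hπ : (0 : ℝ) < π := Real.pi_pos
  have hπ' : π ≠ 0 := hπ.ne'
  have hx0 : (0:ℝ) ∈ Set.Icc (0:ℝ) π := Set.mem_Icc.2 ⟨le_rfl, hπ.le⟩
  have hxp : π / 2 ∈ Set.Icc (0:ℝ) π := Set.mem_Icc.2 ⟨by positivity, by linarith⟩
  have hne : (0:ℝ) ≠ π / 2 := by
    have : (0:ℝ) < π / 2 := by positivity
    exact this.ne
  have hb : 0 < t / (π / 2) := by positivity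
  have ha : 0 < 1 - t / (π / 2) := by
    have : t / (π / 2) < 1 := (div_lt_one (by positivity)).2 h2
    linarith
  have key := strictConcaveOn_sin_Icc.2 hx0 hxp hne ha hb (by ring)
  simp only [smul_eq_mul, Real.sin_zero, mul_zero, zero_add, Real.sin_pi_div_two,
    mul_one] at key
  have harg : t / (π / 2) * (π / 2) = t :=
    div_mul_cancel₀ t (by positivity : (0:ℝ) < π / 2).ne'
  rw [harg] at key
  have h2t : 2 / π * t = t / (π / 2) := by
    field_simp
  rw [h2t]
  exact key

/-- `arcsin y < π/2 * y` for `y ∈ (0,1)`. -/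
lemma arcsin_lt_half_pi_mul {y : ℝ} (h0 : 0 < y) (h1 : y < 1) :
    Real.arcsin y < π / 2 * y := by
  have hπ : (0 : ℝ) < π := Real.pi_pos
  set t := Real.arcsin y with ht
  have ht0 : 0 < t := Real.arcsin_pos.2 h0
  have ht2 : t < π / 2 := Real.arcsin_lt_pi_div_two.2 h1
  have hs : Real.sin t = y := Real.sin_arcsin (by linarith) h1.le
  have hj := jordan_aux ht0 ht2
  rw [hs] at hj
  have hcanc : π / 2 * (2 / π * t) = t := by
    field_simp
  nlinarith [mul_lt_mul_of_pos_left hj (by positivity : (0:ℝ) < π / 2)]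

theorem dprime_exists_unique_between (N : ℕ) (hN : 3 < N)
    (α : ℕ → ℝ) (hαμ : ∀ μ ∈ Finset.Ico 1 N, α μ < 0)
    (τ : ℕ) (hτ : τ ∈ Finset.Ico 1 N)
    (hτmin : ∀ μ ∈ Finset.Ico 1 N, |α τ| ≤ |α μ|)
    (σ : ℕ) (hσ : σ ∈ (Finset.Ico 1 N).erase τ)
    (hσmin : ∀ μ ∈ (Finset.Ico 1 N).erase τ, |α σ| ≤ |α μ|) :
    (∃! x : ℝ, x ∈ Set.Ioo (0 : ℝ) |α σ| ∧
      (∑ μ ∈ (Finset.Ico 1 N).erase τ, Real.arcsin (x / |α μ|)) = π / 2) ∧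
    (∀ x ∈ Set.Ioo (0 : ℝ) |α σ|,
      (∑ μ ∈ (Finset.Ico 1 N).erase τ, Real.arcsin (x / |α μ|)) = π / 2 →
      0 < (∑ μ ∈ (Finset.Ico 1 N).erase τ, |α μ|⁻¹)⁻¹ ∧
      (∑ μ ∈ (Finset.Ico 1 N).erase τ, |α μ|⁻¹)⁻¹ < x) := by
  set s := (Finset.Ico 1 N).erase τ with hs_def
  have hπ : (0 : ℝ) < π := Real.pi_pos
  have hc : ∀ μ ∈ s, 0 < |α μ| := fun μ hμ =>
    abs_pos.2 (hαμ μ (Finset.mem_of_mem_erase hμ)).ne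
  have hcσ : 0 < |α σ| := hc σ hσ
  set g : ℝ → ℝ := fun x => ∑ μ ∈ s, Real.arcsin (x / |α μ|) with hg_def
  have hg_cont : Continuous g :=
    continuous_finset_sum _ fun μ _ => Real.continuous_arcsin.comp (continuous_id.div_const _)
  have hg0 : g 0 = 0 := by simp [hg_def]
  -- strict monotonicity on [0, |α σ|]
  have hmono : StrictMonoOn g (Set.Icc 0 |α σ|) := by
    intro a ha b hb hab
    apply Finset.sum_lt_sum
    · intro μ hμ
      exact Real.monotone_arcsin (by
        have := hc μ hμ
        gcongr)
    · refine ⟨σ, hσ, ?_⟩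
      have hma : a / |α σ| ∈ Set.Icc (-1 : ℝ) 1 := by
        constructor
        · have : (0:ℝ) ≤ a / |α σ| := div_nonneg ha.1 hcσ.le
          linarith
        · exact (div_le_one hcσ).2 ha.2
      have hmb : b / |α σ| ∈ Set.Icc (-1 : ℝ) 1 := by
        constructor
        · have : (0:ℝ) ≤ b / |α σ| := div_nonneg hb.1 hcσ.le
          linarith
        · exact (div_le_one hcσ).2 hb.2
      exact Real.strictMonoOn_arcsin hma hmb (by gcongr)
  -- cardinality facts
  have hcard : 2 ≤ s.card := by
    have : s.card = N - 2 := by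
      rw [hs_def, Finset.card_erase_of_mem hτ, Nat.card_Ico]
      omega
    omega
  have hsne : s.Nonempty := Finset.card_pos.1 (by omega)
  have hserase : (s.erase σ).Nonempty := by
    apply Finset.card_pos.1
    rw [Finset.card_erase_of_mem hσ]
    omega
  -- g at the right endpoint exceeds π/2
  have hgσ : π / 2 < g |α σ| := by
    have hsplit : g |α σ| =
        Real.arcsin (|α σ| / |α σ|) + ∑ μ ∈ s.erase σ, Real.arcsin (|α σ| / |α μ|) :=
      (Finset.add_sum_erase s _ hσ).symm
    rw [hsplit, div_self hcσ.ne', Real.arcsin_one]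
    have hpos : 0 < ∑ μ ∈ s.erase σ, Real.arcsin (|α σ| / |α μ|) := by
      apply Finset.sum_pos
      · intro μ hμ
        exact Real.arcsin_pos.2 (div_pos hcσ (hc μ (Finset.mem_of_mem_erase hμ)))
      · exact hserase
    linarith
  -- existence
  have hmem : π / 2 ∈ Set.Ioo (g 0) (g |α σ|) := ⟨by rw [hg0]; positivity, hgσ⟩
  obtain ⟨x₀, hx₀, hgx₀⟩ := intermediate_value_Ioo hcσ.le hg_cont.continuousOn hmem
  -- the second part, proved first as a general claim
  have hPart2 : ∀ x ∈ Set.Ioo (0 : ℝ) |α σ|, g x = π / 2 →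
      0 < (∑ μ ∈ s, |α μ|⁻¹)⁻¹ ∧ (∑ μ ∈ s, |α μ|⁻¹)⁻¹ < x := by
    intro x hx hgx
    have hSpos : 0 < ∑ μ ∈ s, |α μ|⁻¹ :=
      Finset.sum_pos (fun μ hμ => inv_pos.2 (hc μ hμ)) hsne
    have hlt : g x < ∑ μ ∈ s, π / 2 * (x / |α μ|) := by
      apply Finset.sum_lt_sum_of_nonempty hsne
      intro μ hμ
      have hcμ : 0 < |α μ| := hc μ hμ
      apply arcsin_lt_half_pi_mul
      · exact div_pos hx.1 hcμ
      · exact (div_lt_one hcμ).2 (lt_of_lt_of_le hx.2 (hσmin μ hμ))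
    have hsum : ∑ μ ∈ s, π / 2 * (x / |α μ|) = π / 2 * (x * ∑ μ ∈ s, |α μ|⁻¹) := by
      simp only [Finset.mul_sum]
      exact Finset.sum_congr rfl fun μ _ => by ring
    rw [hgx, hsum] at hlt
    have h1 : 1 < x * ∑ μ ∈ s, |α μ|⁻¹ := by nlinarith
    constructor
    · positivity
    · rw [inv_eq_one_div, div_lt_iff₀ hSpos]
      linarith [mul_comm x (∑ μ ∈ s, |α μ|⁻¹)] 
  refine ⟨⟨x₀, ⟨hx₀, hgx₀⟩, ?_⟩, hPart2⟩
  rintro y ⟨hy, hgy⟩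
  have hsub : Set.Ioo (0 : ℝ) |α σ| ⊆ Set.Icc 0 |α σ| := Set.Ioo_subset_Icc_self
  exact hmono.injOn (hsub hy) (hsub hx₀) (hgy.trans hgx₀.symm)
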